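/- The pivot along edge uv toggles exactly the edges between the three sets A = N(u) ∩ N(v), B = N(u) \ (N(v) ∪ {v}), C = N(v) \ (N(u) ∪ {u}): for x, y lying in two different sets among A, B, C, x and y are adjacent in G ∧ uv iff they are not adjacent in G; adjacency within each set, and all adjacencies not between these sets (except the swap of u and v's roles), are preserved in the following sense: for x, y both in the same one of A, B, C, adjacency is unchanged. -/

import Mathlib

/-- Local complementation of `G` at `u`: adjacency between two distinct common
neighbors of `u` is toggled; all other adjacencies are unchanged. -/
def localComp {V : Type*} (G : SimpleGraph V) (u : V) : SimpleGraph V where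
  Adj v w := v ≠ w ∧ Xor' (G.Adj v w) (G.Adj u v ∧ G.Adj u w)
  symm := by
    constructor
    intro v w h
    refine ⟨h.1.symm, ?_⟩
    rcases h.2 with ⟨ha, hb⟩ | ⟨ha, hb⟩
    · exact Or.inl ⟨G.adj_symm ha, fun hc => hb ⟨hc.2, hc.1⟩⟩
    · exact Or.inr ⟨⟨ha.2, ha.1⟩, fun hc => hb (G.adj_symm hc)⟩
  loopless := ⟨fun v h => h.1 rfl⟩

/-- The pivot of `G` along the edge `uv`: `G ∧ uv = G ⋆ u ⋆ v ⋆ u`. -/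
def pivot {V : Type*} (G : SimpleGraph V) (u v : V) : SimpleGraph V :=
  localComp (localComp (localComp G u) v) u

lemma localComp_adj' {V : Type*} (G : SimpleGraph V) (u v w : V) :
    (localComp G u).Adj v w ↔ v ≠ w ∧ Xor' (G.Adj v w) (G.Adj u v ∧ G.Adj u w) := Iff.rfl

/-- The pivot along `uv` toggles exactly the edges between the three sets
`A = N(u) ∩ N(v)`, `B = N(u) \ (N(v) ∪ {v})`, `C = N(v) \ (N(u) ∪ {u})`,
and preserves adjacency within each of the three sets. -/
theorem pivot_toggles {V : Type*} (G : SimpleGraph V) (u v : V) (h : G.Adj u v)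
    (A B C : Set V)
    (hA : A = G.neighborSet u ∩ G.neighborSet v)
    (hB : B = G.neighborSet u \ (G.neighborSet v ∪ {v}))
    (hC : C = G.neighborSet v \ (G.neighborSet u ∪ {u})) :
    (∀ x y : V, ((x ∈ A ∧ y ∈ B) ∨ (x ∈ A ∧ y ∈ C) ∨ (x ∈ B ∧ y ∈ C)) →
        ((pivot G u v).Adj x y ↔ ¬ G.Adj x y)) ∧
    (∀ x y : V, x ≠ y →
        ((x ∈ A ∧ y ∈ A) ∨ (x ∈ B ∧ y ∈ B) ∨ (x ∈ C ∧ y ∈ C)) →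
        ((pivot G u v).Adj x y ↔ G.Adj x y)) := by
  subst hA hB hC
  have hvu : G.Adj v u := h.symm
  have huu : ¬ G.Adj u u := G.irrefl
  have hvv : ¬ G.Adj v v := G.irrefl
  have h8 : u ≠ v := h.ne
  have h9 : v ≠ u := h.ne'
  constructor
  · rintro x y (⟨hx, hy⟩ | ⟨hx, hy⟩ | ⟨hx, hy⟩) <;>
      simp only [Set.mem_inter_iff, Set.mem_diff, Set.mem_union,
        Set.mem_singleton_iff, SimpleGraph.mem_neighborSet, not_or] at hx hy
    · obtain ⟨hux, hvx⟩ := hx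
      obtain ⟨huy, hvy, hyv⟩ := hy
      have hxy : x ≠ y := fun e => hvy (e ▸ hvx)
      have h1 : u ≠ x := hux.ne
      have h2 : x ≠ u := hux.ne'
      have h3 : v ≠ x := hvx.ne
      have h4 : x ≠ v := hvx.ne'
      have h5 : u ≠ y := huy.ne
      have h6 : y ≠ u := huy.ne'
      have h7 : v ≠ y := fun e => hyv e.symm
      simp [pivot, localComp_adj', Xor', xor_def, h, hux, hvx, huy, hvy, hxy,
        h1, h2, h3, h4, h5, h6, h7, h8, h9, hvu, huu, hvv]
    · obtain ⟨hux, hvx⟩ := hx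
      obtain ⟨hvy, huy, hyu⟩ := hy
      have hxy : x ≠ y := fun e => huy (e ▸ hux)
      have h1 : u ≠ x := hux.ne
      have h2 : x ≠ u := hux.ne'
      have h3 : v ≠ x := hvx.ne
      have h4 : x ≠ v := hvx.ne'
      have h5 : v ≠ y := hvy.ne
      have h6 : y ≠ v := hvy.ne'
      have h7 : u ≠ y := fun e => hyu e.symm
      simp [pivot, localComp_adj', Xor', xor_def, h, hux, hvx, huy, hvy, hxy,
        h1, h2, h3, h4, h5, h6, h7, h8, h9, hvu, huu, hvv]
    · obtain ⟨hux, hvx, hxv⟩ := hx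
      obtain ⟨hvy, huy, hyu⟩ := hy
      have hxy : x ≠ y := fun e => huy (e ▸ hux)
      have h1 : u ≠ x := hux.ne
      have h2 : x ≠ u := hux.ne'
      have h3 : v ≠ x := fun e => hxv e.symm
      have h5 : v ≠ y := hvy.ne
      have h6 : y ≠ v := hvy.ne'
      have h7 : u ≠ y := fun e => hyu e.symm
      simp [pivot, localComp_adj', Xor', xor_def, h, hux, hvx, huy, hvy, hxy,
        h1, h2, h3, hxv, h5, h6, h7, h8, h9, hvu, huu, hvv]
  · rintro x y hxy (⟨hx, hy⟩ | ⟨hx, hy⟩ | ⟨hx, hy⟩) <;>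
      simp only [Set.mem_inter_iff, Set.mem_diff, Set.mem_union,
        Set.mem_singleton_iff, SimpleGraph.mem_neighborSet, not_or] at hx hy
    · obtain ⟨hux, hvx⟩ := hx
      obtain ⟨huy, hvy⟩ := hy
      have h1 : u ≠ x := hux.ne
      have h2 : x ≠ u := hux.ne'
      have h3 : v ≠ x := hvx.ne
      have h4 : x ≠ v := hvx.ne'
      have h5 : u ≠ y := huy.ne
      have h6 : y ≠ u := huy.ne'
      have h7 : v ≠ y := hvy.ne
      have h10 : y ≠ v := hvy.ne'
      simp [pivot, localComp_adj', Xor', xor_def, h, hux, hvx, huy, hvy, hxy,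
        h1, h2, h3, h4, h5, h6, h7, h10, h8, h9, hvu, huu, hvv]
    · obtain ⟨hux, hvx, hxv⟩ := hx
      obtain ⟨huy, hvy, hyv⟩ := hy
      have h1 : u ≠ x := hux.ne
      have h2 : x ≠ u := hux.ne'
      have h3 : v ≠ x := fun e => hxv e.symm
      have h5 : u ≠ y := huy.ne
      have h6 : y ≠ u := huy.ne'
      have h7 : v ≠ y := fun e => hyv e.symm
      simp [pivot, localComp_adj', Xor', xor_def, h, hux, hvx, huy, hvy, hxy,
        h1, h2, h3, hxv, h5, h6, h7, hyv, h8, h9, hvu, huu, hvv]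
    · obtain ⟨hvx, hux, hxu⟩ := hx
      obtain ⟨hvy, huy, hyu⟩ := hy
      have h1 : u ≠ x := fun e => hxu e.symm
      have h3 : v ≠ x := hvx.ne
      have h4 : x ≠ v := hvx.ne'
      have h5 : v ≠ y := hvy.ne
      have h6 : y ≠ v := hvy.ne'
      have h7 : u ≠ y := fun e => hyu e.symm
      simp [pivot, localComp_adj', Xor', xor_def, h, hux, hvx, huy, hvy, hxy,
        h1, hxu, h3, h4, h5, h6, h7, hyu, h8, h9, hvu, huu, hvv]
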